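/- Exact-case convergence of conservative MPI: in the error-free conservative scheme with constant mixture rate α ∈ (0,1], the losses satisfy ‖v_* - v_{π_k}‖_∞ ≤ C · (1 - α(1-γ))^k for some constant C depending only on the initial condition, γ, and R. -/

import Mathlib

open Finset

/-- A (stochastic) policy: for each state, a probability distribution over actions. -/
def IsPolicy {S A : Type*} [Fintype A] (π : S → A → ℝ) : Prop :=
  (∀ s a, 0 ≤ π s a) ∧ ∀ s, ∑ a, π s a = 1

/-- A Markov transition kernel: for each state-action pair, a distribution over next states. -/
def IsKernel {S A : Type*} [Fintype S] (P : S → A → S → ℝ) : Prop :=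
  (∀ s a s', 0 ≤ P s a s') ∧ ∀ s a, ∑ s', P s a s' = 1

/-- One-step state-action evaluation: q(s,a) = r(s,a) + γ E_{s'}[v(s')]. -/
noncomputable def qOf {S A : Type*} [Fintype S] (r : S → A → ℝ) (P : S → A → S → ℝ)
    (γ : ℝ) (v : S → ℝ) (s : S) (a : A) : ℝ :=
  r s a + γ * ∑ s', P s a s' * v s'

/-- Bellman evaluation operator T_π. -/
noncomputable def Tpol {S A : Type*} [Fintype S] [Fintype A] (r : S → A → ℝ)
    (P : S → A → S → ℝ) (γ : ℝ) (π : S → A → ℝ) (v : S → ℝ) (s : S) : ℝ :=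
  ∑ a, π s a * qOf r P γ v s a

/-- Bellman optimality operator T_*. -/
noncomputable def Tstar {S A : Type*} [Fintype S] [Fintype A] [Nonempty A]
    (r : S → A → ℝ) (P : S → A → S → ℝ) (γ : ℝ) (v : S → ℝ) (s : S) : ℝ :=
  Finset.univ.sup' Finset.univ_nonempty (fun a => qOf r P γ v s a)

/-- Transition matrix P_π of a policy. -/
noncomputable def Ppol {S A : Type*} [Fintype A] (P : S → A → S → ℝ)
    (π : S → A → ℝ) : Matrix S S ℝ :=
  fun s s' => ∑ a, π s a * P s a s'

/-- Expected reward r_π of a policy. -/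
noncomputable def rpol {S A : Type*} [Fintype A] (r : S → A → ℝ)
    (π : S → A → ℝ) (s : S) : ℝ :=
  ∑ a, π s a * r s a

set_option linter.unusedSectionVars false

section Lemmas
variable {S A : Type*} [Fintype S] [Fintype A] [Nonempty S] [Nonempty A]
variable {r : S → A → ℝ} {P : S → A → S → ℝ} {γ : ℝ}

/-- q shift inequality -/
lemma qOf_shift (hP : IsKernel P) (hγ0 : 0 ≤ γ) {u w : S → ℝ} {c : ℝ}
    (h : ∀ s, u s ≤ w s + c) : ∀ s a, qOf r P γ u s a ≤ qOf r P γ w s a + γ * c := by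
  intro s a
  have hsum : ∑ s', P s a s' * u s' ≤ (∑ s', P s a s' * w s') + c := by
    calc ∑ s', P s a s' * u s' ≤ ∑ s', P s a s' * (w s' + c) :=
          Finset.sum_le_sum (fun s' _ => mul_le_mul_of_nonneg_left (h s') (hP.1 s a s'))
    _ = (∑ s', P s a s' * w s') + (∑ s', P s a s') * c := by
          rw [Finset.sum_mul]; rw [← Finset.sum_add_distrib]; ring_nf; congr 1; funext x; ring
    _ = (∑ s', P s a s' * w s') + c := by rw [hP.2 s a, one_mul]
  simp only [qOf]
  have := mul_le_mul_of_nonneg_left hsum hγ0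
  nlinarith [this]

lemma qOf_shift_exact (hP : IsKernel P) {u : S → ℝ} {c : ℝ} :
    ∀ s a, qOf r P γ (fun x => u x + c) s a = qOf r P γ u s a + γ * c := by
  intro s a
  simp only [qOf]
  have : ∑ s', P s a s' * (u s' + c) = (∑ s', P s a s' * u s') + c := by
    rw [show (fun s' => P s a s' * (u s' + c)) = fun s' => P s a s' * u s' + P s a s' * c by
      funext s'; ring]
    rw [Finset.sum_add_distrib, ← Finset.sum_mul, hP.2 s a, one_mul]
  rw [this]; ring

lemma Tpol_shift (hP : IsKernel P) (hγ0 : 0 ≤ γ) {π₀ : S → A → ℝ} (hπ₀ : IsPolicy π₀)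
    {u w : S → ℝ} {c : ℝ} (h : ∀ s, u s ≤ w s + c) :
    ∀ s, Tpol r P γ π₀ u s ≤ Tpol r P γ π₀ w s + γ * c := by
  intro s
  simp only [Tpol]
  calc ∑ a, π₀ s a * qOf r P γ u s a
      ≤ ∑ a, π₀ s a * (qOf r P γ w s a + γ * c) :=
        Finset.sum_le_sum (fun a _ => mul_le_mul_of_nonneg_left (qOf_shift hP hγ0 h s a) (hπ₀.1 s a))
    _ = (∑ a, π₀ s a * qOf r P γ w s a) + (∑ a, π₀ s a) * (γ * c) := by
        rw [Finset.sum_mul, ← Finset.sum_add_distrib]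
        congr 1; funext a; ring
    _ = (∑ a, π₀ s a * qOf r P γ w s a) + γ * c := by rw [hπ₀.2 s, one_mul]

lemma Tpol_shift_exact (hP : IsKernel P) {π₀ : S → A → ℝ} (hπ₀ : IsPolicy π₀)
    {u : S → ℝ} {c : ℝ} :
    ∀ s, Tpol r P γ π₀ (fun x => u x + c) s = Tpol r P γ π₀ u s + γ * c := by
  intro s
  simp only [Tpol]
  rw [show (fun a => π₀ s a * qOf r P γ (fun x => u x + c) s a)
      = fun a => π₀ s a * qOf r P γ u s a + π₀ s a * (γ * c) by
    funext a; rw [qOf_shift_exact hP]; ring]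
  rw [Finset.sum_add_distrib, ← Finset.sum_mul, hπ₀.2 s, one_mul]

lemma Tstar_shift (hP : IsKernel P) (hγ0 : 0 ≤ γ) {u w : S → ℝ} {c : ℝ}
    (h : ∀ s, u s ≤ w s + c) :
    ∀ s, Tstar r P γ u s ≤ Tstar r P γ w s + γ * c := by
  intro s
  apply Finset.sup'_le
  intro a _
  calc qOf r P γ u s a ≤ qOf r P γ w s a + γ * c := qOf_shift hP hγ0 h s a
    _ ≤ Tstar r P γ w s + γ * c := by
        gcongr
        exact Finset.le_sup' (fun a => qOf r P γ w s a) (Finset.mem_univ a)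

lemma Tstar_shift_exact (hP : IsKernel P) {u : S → ℝ} {c : ℝ} :
    ∀ s, Tstar r P γ (fun x => u x + c) s = Tstar r P γ u s + γ * c := by
  intro s
  simp only [Tstar]
  rw [show (fun a => qOf r P γ (fun x => u x + c) s a) = fun a => qOf r P γ u s a + γ * c by
    funext a; rw [qOf_shift_exact hP]]
  exact (Finset.sup'_add Finset.univ (fun a => qOf r P γ u s a) (γ * c) Finset.univ_nonempty).symm

lemma Tpol_le_Tstar {π₀ : S → A → ℝ} (hπ₀ : IsPolicy π₀) (u : S → ℝ) :
    ∀ s, Tpol r P γ π₀ u s ≤ Tstar r P γ u s := by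
  intro s
  simp only [Tpol]
  calc ∑ a, π₀ s a * qOf r P γ u s a ≤ ∑ a, π₀ s a * Tstar r P γ u s :=
        Finset.sum_le_sum (fun a _ => mul_le_mul_of_nonneg_left
          (Finset.le_sup' (fun a => qOf r P γ u s a) (Finset.mem_univ a)) (hπ₀.1 s a))
    _ = Tstar r P γ u s := by rw [← Finset.sum_mul, hπ₀.2 s, one_mul]

end Lemmas
section Lemmas2
variable {S A : Type*} [Fintype S] [Fintype A] [Nonempty S] [Nonempty A]
variable {r : S → A → ℝ} {P : S → A → S → ℝ} {γ : ℝ}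

/-- iterated shift inequality -/
lemma Tpol_iter_shift (hP : IsKernel P) (hγ0 : 0 ≤ γ) {π₀ : S → A → ℝ} (hπ₀ : IsPolicy π₀)
    (j : ℕ) {u w : S → ℝ} {c : ℝ} (h : ∀ s, u s ≤ w s + c) :
    ∀ s, (Tpol r P γ π₀)^[j] u s ≤ (Tpol r P γ π₀)^[j] w s + γ ^ j * c := by
  induction j generalizing u w c with
  | zero => simpa using h
  | succ j ih =>
    intro s
    rw [Function.iterate_succ_apply, Function.iterate_succ_apply]
    have h1 : ∀ s, Tpol r P γ π₀ u s ≤ Tpol r P γ π₀ w s + γ * c := Tpol_shift hP hγ0 hπ₀ h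
    have := ih h1 s
    calc (Tpol r P γ π₀)^[j] (Tpol r P γ π₀ u) s
        ≤ (Tpol r P γ π₀)^[j] (Tpol r P γ π₀ w) s + γ ^ j * (γ * c) := this
      _ = (Tpol r P γ π₀)^[j] (Tpol r P γ π₀ w) s + γ ^ (j+1) * c := by ring

/-- iterated exact shift -/
lemma Tpol_iter_shift_exact (hP : IsKernel P) {π₀ : S → A → ℝ} (hπ₀ : IsPolicy π₀)
    (j : ℕ) {u : S → ℝ} {c : ℝ} :
    ∀ s, (Tpol r P γ π₀)^[j] (fun x => u x + c) s = (Tpol r P γ π₀)^[j] u s + γ ^ j * c := by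
  induction j generalizing u c with
  | zero => intro s; simp
  | succ j ih =>
    intro s
    rw [Function.iterate_succ_apply, Function.iterate_succ_apply]
    have h1 : Tpol r P γ π₀ (fun x => u x + c) = fun x => Tpol r P γ π₀ u x + γ * c := by
      funext x; exact Tpol_shift_exact hP hπ₀ x
    rw [h1, ih]
    ring

/-- fixed point comparison, lower form: u ≤ Tu + c ⇒ u ≤ vf + c/(1-γ) -/
lemma fp_le (hP : IsKernel P) (hγ0 : 0 ≤ γ) (hγ1 : γ < 1) {π₀ : S → A → ℝ}
    (hπ₀ : IsPolicy π₀) {u vf : S → ℝ} {c : ℝ}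
    (hfix : Tpol r P γ π₀ vf = vf) (h : ∀ s, u s ≤ Tpol r P γ π₀ u s + c) :
    ∀ s, u s ≤ vf s + c / (1 - γ) := by
  set δ : ℝ := Finset.univ.sup' Finset.univ_nonempty (fun s => u s - vf s) with hδ
  have hub : ∀ s, u s ≤ vf s + δ := by
    intro s
    have : u s - vf s ≤ δ := Finset.le_sup' (fun s => u s - vf s) (Finset.mem_univ s)
    linarith
  have key : δ ≤ γ * δ + c := by
    apply Finset.sup'_le
    intro s _
    have h2 : Tpol r P γ π₀ u s ≤ Tpol r P γ π₀ vf s + γ * δ := Tpol_shift hP hγ0 hπ₀ hub s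
    have h3 := h s
    have h4 : Tpol r P γ π₀ vf s = vf s := congrFun hfix s
    linarith
  have hδle : δ ≤ c / (1 - γ) := by
    rw [le_div_iff₀ (by linarith)]
    nlinarith
  intro s
  have := hub s
  linarith

/-- fixed point comparison, upper form: Tu ≤ u + c ⇒ vf ≤ u + c/(1-γ) -/
lemma fp_ge (hP : IsKernel P) (hγ0 : 0 ≤ γ) (hγ1 : γ < 1) {π₀ : S → A → ℝ}
    (hπ₀ : IsPolicy π₀) {u vf : S → ℝ} {c : ℝ}
    (hfix : Tpol r P γ π₀ vf = vf) (h : ∀ s, Tpol r P γ π₀ u s ≤ u s + c) :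
    ∀ s, vf s ≤ u s + c / (1 - γ) := by
  set δ : ℝ := Finset.univ.sup' Finset.univ_nonempty (fun s => vf s - u s) with hδ
  have hub : ∀ s, vf s ≤ u s + δ := by
    intro s
    have : vf s - u s ≤ δ := Finset.le_sup' (fun s => vf s - u s) (Finset.mem_univ s)
    linarith
  have key : δ ≤ γ * δ + c := by
    apply Finset.sup'_le
    intro s _
    have h2 : Tpol r P γ π₀ vf s ≤ Tpol r P γ π₀ u s + γ * δ := Tpol_shift hP hγ0 hπ₀ hub s
    have h3 := h s
    have h4 : Tpol r P γ π₀ vf s = vf s := congrFun hfix s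
    linarith
  have hδle : δ ≤ c / (1 - γ) := by
    rw [le_div_iff₀ (by linarith)]
    nlinarith
  intro s
  have := hub s
  linarith

/-- mixture linearity -/
lemma Tpol_mix {α : ℝ} {πa πb : S → A → ℝ} (u : S → ℝ) :
    ∀ s, Tpol r P γ (fun s a => (1 - α) * πa s a + α * πb s a) u s
      = (1 - α) * Tpol r P γ πa u s + α * Tpol r P γ πb u s := by
  intro s
  simp only [Tpol]
  rw [Finset.mul_sum, Finset.mul_sum, ← Finset.sum_add_distrib]
  congr 1; funext a; ring

/-- bound on Tpol image -/
lemma Tpol_abs_bound {R M : ℝ} (hP : IsKernel P) (hγ0 : 0 ≤ γ) (hr : ∀ s a, |r s a| ≤ R)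
    {π₀ : S → A → ℝ} (hπ₀ : IsPolicy π₀) {u : S → ℝ} (hu : ∀ s, |u s| ≤ M) :
    ∀ s, |Tpol r P γ π₀ u s| ≤ R + γ * M := by
  intro s
  have hq : ∀ a, |qOf r P γ u s a| ≤ R + γ * M := by
    intro a
    simp only [qOf]
    have h1 : |∑ s', P s a s' * u s'| ≤ M := by
      calc |∑ s', P s a s' * u s'| ≤ ∑ s', |P s a s' * u s'| := Finset.abs_sum_le_sum_abs _ _
        _ ≤ ∑ s', P s a s' * M := by
            apply Finset.sum_le_sum
            intro s' _
            rw [abs_mul, abs_of_nonneg (hP.1 s a s')]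
            exact mul_le_mul_of_nonneg_left (hu s') (hP.1 s a s')
        _ = M := by rw [← Finset.sum_mul, hP.2 s a, one_mul]
    calc |r s a + γ * ∑ s', P s a s' * u s'| ≤ |r s a| + |γ * ∑ s', P s a s' * u s'| := abs_add_le _ _
      _ ≤ R + γ * M := by
          rw [abs_mul, abs_of_nonneg hγ0]
          exact add_le_add (hr s a) (mul_le_mul_of_nonneg_left h1 hγ0)
  simp only [Tpol]
  calc |∑ a, π₀ s a * qOf r P γ u s a| ≤ ∑ a, |π₀ s a * qOf r P γ u s a| :=
        Finset.abs_sum_le_sum_abs _ _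
    _ ≤ ∑ a, π₀ s a * (R + γ * M) := by
        apply Finset.sum_le_sum
        intro a _
        rw [abs_mul, abs_of_nonneg (hπ₀.1 s a)]
        exact mul_le_mul_of_nonneg_left (hq a) (hπ₀.1 s a)
    _ = R + γ * M := by rw [← Finset.sum_mul, hπ₀.2 s, one_mul]

/-- fixed point norm bound -/
lemma fix_abs_bound {R : ℝ} (hP : IsKernel P) (hγ0 : 0 ≤ γ) (hγ1 : γ < 1)
    (hr : ∀ s a, |r s a| ≤ R) {π₀ : S → A → ℝ} (hπ₀ : IsPolicy π₀) {vf : S → ℝ}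
    (hfix : Tpol r P γ π₀ vf = vf) : ∀ s, |vf s| ≤ R / (1 - γ) := by
  set M : ℝ := Finset.univ.sup' Finset.univ_nonempty (fun s => |vf s|) with hM
  have hMb : ∀ s, |vf s| ≤ M := fun s => Finset.le_sup' (fun s => |vf s|) (Finset.mem_univ s)
  have key : M ≤ R + γ * M := by
    apply Finset.sup'_le
    intro s _
    have := Tpol_abs_bound hP hγ0 hr hπ₀ hMb s
    rw [congrFun hfix s] at this
    exact this
  intro s
  have h2 : M ≤ R / (1 - γ) := by
    rw [le_div_iff₀ (by linarith)]
    nlinarith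
  exact le_trans (hMb s) h2

end Lemmas2
section Helpers
open Filter Topology

/-- x_{k+1} ≤ γ x_k + u_k with u → 0 implies x → 0 -/
lemma tendsto_zero_of_geom_rec {γ : ℝ} (hγ0 : 0 ≤ γ) (hγ1 : γ < 1) {x u : ℕ → ℝ}
    (hx0 : ∀ k, 0 ≤ x k) (hrec : ∀ k, x (k + 1) ≤ γ * x k + u k)
    (hu : Filter.Tendsto u Filter.atTop (nhds 0)) :
    Filter.Tendsto x Filter.atTop (nhds 0) := by
  rw [Metric.tendsto_atTop]
  intro ε hε
  have hη : (0:ℝ) < (1 - γ) * ε / 2 := by nlinarith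
  obtain ⟨K, hK⟩ := (Metric.tendsto_atTop.1 hu) ((1 - γ) * ε / 2) hη
  have hub : ∀ j, x (K + j) ≤ γ ^ j * x K + ε / 2 := by
    intro j
    induction j with
    | zero => simp; nlinarith [hx0 K, hε]
    | succ j ih =>
      have h1 : x (K + j + 1) ≤ γ * x (K + j) + u (K + j) := hrec (K + j)
      have h2 : u (K + j) ≤ (1 - γ) * ε / 2 := by
        have := hK (K + j) (Nat.le_add_right K j)
        rw [Real.dist_eq, sub_zero] at this
        exact le_trans (le_abs_self _) (le_of_lt this)
      have h3 : γ * x (K + j) ≤ γ * (γ ^ j * x K + ε / 2) :=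
        mul_le_mul_of_nonneg_left ih hγ0
      have : x (K + (j+1)) = x (K + j + 1) := by ring_nf
      rw [this]
      calc x (K + j + 1) ≤ γ * (γ ^ j * x K + ε / 2) + (1 - γ) * ε / 2 := by linarith
        _ = γ ^ (j+1) * x K + (γ * ε / 2 + (1 - γ) * ε / 2) := by ring
        _ ≤ γ ^ (j+1) * x K + ε / 2 := by nlinarith
  -- choose J with γ^J * x K < ε/2
  have hpow : Filter.Tendsto (fun j => γ ^ j * x K) Filter.atTop (nhds 0) := by
    have := tendsto_pow_atTop_nhds_zero_of_lt_one hγ0 hγ1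
    simpa using this.mul_const (x K)
  obtain ⟨J, hJ⟩ := (Metric.tendsto_atTop.1 hpow) (ε / 2) (by positivity)
  refine ⟨K + J, fun k hk => ?_⟩
  have hkK : K ≤ k := le_trans (Nat.le_add_right K J) hk
  obtain ⟨j, rfl⟩ := Nat.exists_eq_add_of_le hkK
  have hjJ : J ≤ j := by omega
  have h5 := hJ j hjJ
  rw [Real.dist_eq, sub_zero] at h5
  have h6 : γ ^ j * x K < ε / 2 := lt_of_abs_lt h5
  rw [Real.dist_eq, sub_zero, abs_of_nonneg (hx0 _)]
  calc x (K + j) ≤ γ ^ j * x K + ε / 2 := hub j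
    _ < ε := by linarith

end Helpers
section Aux
open Filter Topology

theorem aux_eventually_opt {S A : Type*} [Fintype S] [Fintype A] [Nonempty S] [Nonempty A]
    (r : S → A → ℝ) (P : S → A → S → ℝ) (hP : IsKernel P)
    (γ : ℝ) (hγ : γ ∈ Set.Ioo (0:ℝ) 1)
    (m : ℕ) (hm : 1 ≤ m) (α : ℝ) (hα : α ∈ Set.Ioc (0:ℝ) 1)
    (π π' : ℕ → S → A → ℝ) (hπ : ∀ k, IsPolicy (π k)) (hπ' : ∀ k, IsPolicy (π' k))
    (v : ℕ → S → ℝ)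
    (hrec : ∀ k, v (k + 1) = (Tpol r P γ (π (k + 1)))^[m] (v k))
    (hgreedy : ∀ k s, Tpol r P γ (π' (k + 1)) (v k) s = Tstar r P γ (v k) s)
    (hmix : ∀ k, π (k + 1) = fun s a => (1 - α) * π k s a + α * π' (k + 1) s a)
    (vstar : S → ℝ) (hstar : ∀ s, Tstar r P γ vstar s = vstar s)
    (hstart : ∀ s, v 0 s ≤ Tpol r P γ (π 1) (v 0) s) :
    ∃ K₂ : ℕ, ∀ k, K₂ ≤ k → ∀ s, Tpol r P γ (π' (k + 1)) vstar s = vstar s := by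
  obtain ⟨hγ0, hγ1⟩ := hγ
  obtain ⟨hα0, hα1⟩ := hα
  have hγ0' : (0:ℝ) ≤ γ := le_of_lt hγ0
  -- Step A : v k ≤ T_{k+1} (v k), monotonicity
  have hTv : ∀ k, ∀ s, v k s ≤ Tpol r P γ (π (k + 1)) (v k) s := by
    intro k
    induction k with
    | zero => exact hstart
    | succ k ih =>
      -- iterates of T_{k+1} on v k are monotone in j
      have hstep : ∀ j s, (Tpol r P γ (π (k+1)))^[j] (v k) s
          ≤ (Tpol r P γ (π (k+1)))^[j+1] (v k) s := by
        intro j s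
        have h0 : ∀ s, v k s ≤ Tpol r P γ (π (k+1)) (v k) s + 0 := by
          intro s; simpa using ih s
        have := Tpol_iter_shift (r := r) hP hγ0' (hπ (k+1)) j h0 s
        simpa [Function.iterate_succ_apply] using this
      have hv1 : ∀ s, v (k+1) s ≤ Tpol r P γ (π (k+1)) (v (k+1)) s := by
        intro s
        conv_lhs => rw [hrec k]
        conv_rhs => rw [hrec k]
        rw [show Tpol r P γ (π (k+1)) ((Tpol r P γ (π (k+1)))^[m] (v k))
            = (Tpol r P γ (π (k+1)))^[m+1] (v k) from (Function.iterate_succ_apply' _ m _).symm]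
        exact hstep m s
      intro s
      have hmixk := hmix (k+1)
      have h2 : Tpol r P γ (π (k+1+1)) (v (k+1)) s
          = (1 - α) * Tpol r P γ (π (k+1)) (v (k+1)) s
            + α * Tpol r P γ (π' (k+1+1)) (v (k+1)) s := by
        rw [hmixk]; exact Tpol_mix _ s
      have h3 : Tpol r P γ (π' (k+1+1)) (v (k+1)) s = Tstar r P γ (v (k+1)) s :=
        hgreedy (k+1) s
      have h4 : Tpol r P γ (π (k+1)) (v (k+1)) s ≤ Tstar r P γ (v (k+1)) s :=
        Tpol_le_Tstar (hπ (k+1)) _ s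
      have h5 := hv1 s
      rw [h2, h3]
      nlinarith
  -- j-monotone iterates, for every k
  have hstepall : ∀ k j s, (Tpol r P γ (π (k+1)))^[j] (v k) s
      ≤ (Tpol r P γ (π (k+1)))^[j+1] (v k) s := by
    intro k j s
    have h0 : ∀ s, v k s ≤ Tpol r P γ (π (k+1)) (v k) s + 0 := by
      intro s; simpa using hTv k s
    have := Tpol_iter_shift (r := r) hP hγ0' (hπ (k+1)) j h0 s
    simpa [Function.iterate_succ_apply] using this
  have hmonoj : ∀ k s, Monotone (fun j => (Tpol r P γ (π (k+1)))^[j] (v k) s) :=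
    fun k s => monotone_nat_of_le_succ (fun j => hstepall k j s)
  -- v k ≤ v (k+1), and T_{k+1} v k ≤ v (k+1)
  have hmono : ∀ k s, v k s ≤ v (k+1) s := by
    intro k s
    have := hmonoj k s (Nat.zero_le m)
    simpa [hrec k] using this
  have hTm : ∀ k s, Tpol r P γ (π (k+1)) (v k) s ≤ v (k+1) s := by
    intro k s
    have := hmonoj k s hm
    simpa [hrec k] using this
  -- Step B : upper bound v k ≤ vstar + γ^(m k) c'
  set c' : ℝ := max 0 (Finset.univ.sup' Finset.univ_nonempty (fun s => v 0 s - vstar s)) with hc'def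
  have hc'0 : 0 ≤ c' := le_max_left _ _
  have hub : ∀ k s, v k s ≤ vstar s + γ ^ (m * k) * c' := by
    intro k
    induction k with
    | zero =>
      intro s
      have h1 : v 0 s - vstar s ≤ c' := le_trans
        (Finset.le_sup' (fun s => v 0 s - vstar s) (Finset.mem_univ s)) (le_max_right _ _)
      simpa using by linarith
    | succ k ih =>
      have hstepB : ∀ (j : ℕ) (u : S → ℝ) (c : ℝ), (∀ s, u s ≤ vstar s + c) →
          ∀ s, (Tpol r P γ (π (k+1)))^[j] u s ≤ vstar s + γ ^ j * c := by
        intro j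
        induction j with
        | zero => intro u c h s; simpa using h s
        | succ j ihj =>
          intro u c h s
          rw [Function.iterate_succ_apply']
          have h1 : ∀ s, (Tpol r P γ (π (k+1)))^[j] u s ≤ vstar s + γ ^ j * c := ihj u c h
          have h2 := Tpol_shift (r := r) hP hγ0' (hπ (k+1)) h1 s
          have h3 : Tpol r P γ (π (k+1)) vstar s ≤ Tstar r P γ vstar s :=
            Tpol_le_Tstar (hπ (k+1)) _ s
          rw [hstar s] at h3
          calc Tpol r P γ (π (k+1)) ((Tpol r P γ (π (k+1)))^[j] u) s
              ≤ Tpol r P γ (π (k+1)) vstar s + γ * (γ ^ j * c) := h2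
            _ ≤ vstar s + γ ^ (j+1) * c := by rw [pow_succ]; nlinarith
      intro s
      have := hstepB m (v k) (γ ^ (m*k) * c') ih s
      rw [hrec k]
      calc (Tpol r P γ (π (k+1)))^[m] (v k) s ≤ vstar s + γ ^ m * (γ ^ (m*k) * c') := this
        _ = vstar s + γ ^ (m * (k+1)) * c' := by
            rw [← mul_assoc, ← pow_add]
            congr 2
            ring
  -- Step C : the limit w
  have hmono_s : ∀ s, Monotone (fun k => v k s) :=
    fun s => monotone_nat_of_le_succ (fun k => hmono k s)
  have hbdd : ∀ s, BddAbove (Set.range fun k => v k s) := by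
    intro s
    refine ⟨vstar s + c', ?_⟩
    rintro x ⟨k, rfl⟩
    have h1 := hub k s
    have h2 : γ ^ (m * k) ≤ 1 := pow_le_one₀ hγ0' (le_of_lt hγ1)
    nlinarith
  set w : S → ℝ := fun s => ⨆ k, v k s with hwdef
  have hvw : ∀ s, Filter.Tendsto (fun k => v k s) Filter.atTop (nhds (w s)) :=
    fun s => tendsto_atTop_ciSup (hmono_s s) (hbdd s)
  have hvlew : ∀ k s, v k s ≤ w s := fun k s => le_ciSup (hbdd s) k
  have hwle : ∀ s, w s ≤ vstar s := by
    intro s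
    have hrhs : Filter.Tendsto (fun k => vstar s + γ ^ (m * k) * c') Filter.atTop
        (nhds (vstar s + 0 * c')) := by
      apply Filter.Tendsto.add tendsto_const_nhds
      apply Filter.Tendsto.mul_const
      have hb0 : (0:ℝ) ≤ γ ^ m := pow_nonneg hγ0' m
      have hb1 : γ ^ m < 1 := pow_lt_one₀ hγ0' hγ1 (by omega)
      have := tendsto_pow_atTop_nhds_zero_of_lt_one hb0 hb1
      simpa [pow_mul] using this
    have := le_of_tendsto_of_tendsto' (hvw s) hrhs (fun k => hub k s)
    simpa using this
  -- Step D : uniform approach from below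
  have hD : ∀ η : ℝ, 0 < η → ∃ K, ∀ k, K ≤ k → ∀ s, w s - v k s < η := by
    intro η hη
    have hev : ∀ s : S, ∀ᶠ k in Filter.atTop, w s - v k s < η := by
      intro s
      obtain ⟨N, hN⟩ := (Metric.tendsto_atTop.1 (hvw s)) η hη
      refine Filter.eventually_atTop.2 ⟨N, fun k hk => ?_⟩
      have := hN k hk
      rw [Real.dist_eq] at this
      have h2 := abs_lt.1 this
      linarith [h2.1]
    have hall : ∀ᶠ k in Filter.atTop, ∀ s : S, w s - v k s < η :=
      Filter.eventually_all.2 hev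
    exact Filter.eventually_atTop.1 hall
  -- Step E : the gap argument
  classical
  set Gs : Finset (S × A) := Finset.univ.filter
    (fun p => qOf r P γ w p.1 p.2 < Tstar r P γ w p.1) with hGsdef
  set δ : ℝ := if h : Gs.Nonempty then
      Gs.inf' h (fun p => Tstar r P γ w p.1 - qOf r P γ w p.1 p.2) else 1 with hδdef
  have hδpos : 0 < δ := by
    rw [hδdef]
    split_ifs with h
    · rw [Finset.lt_inf'_iff]
      intro p hp
      have := (Finset.mem_filter.1 hp).2
      linarith
    · exact one_pos
  obtain ⟨K₂, hK₂⟩ := hD δ hδpos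
  have hopt : ∀ k, K₂ ≤ k → ∀ s, Tpol r P γ (π' (k+1)) w s = Tstar r P γ w s := by
    intro k hk s
    -- support of the greedy policy achieves the max of q(v k)
    have hsum0 : ∑ a, π' (k+1) s a * (Tstar r P γ (v k) s - qOf r P γ (v k) s a) = 0 := by
      have h1 : ∑ a, π' (k+1) s a * (Tstar r P γ (v k) s - qOf r P γ (v k) s a)
          = (∑ a, π' (k+1) s a) * Tstar r P γ (v k) s - Tpol r P γ (π' (k+1)) (v k) s := by
        simp only [Tpol]
        rw [Finset.sum_mul, ← Finset.sum_sub_distrib]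
        congr 1; funext a; ring
      rw [h1, (hπ' (k+1)).2 s, one_mul, hgreedy k s, sub_self]
    have hterm : ∀ a, π' (k+1) s a * (Tstar r P γ (v k) s - qOf r P γ (v k) s a) = 0 := by
      have hnn : ∀ a ∈ Finset.univ, 0 ≤ π' (k+1) s a *
          (Tstar r P γ (v k) s - qOf r P γ (v k) s a) := by
        intro a _
        apply mul_nonneg ((hπ' (k+1)).1 s a)
        have : qOf r P γ (v k) s a ≤ Tstar r P γ (v k) s :=
          Finset.le_sup' (fun a => qOf r P γ (v k) s a) (Finset.mem_univ a)
        linarith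
      intro a
      exact (Finset.sum_eq_zero_iff_of_nonneg hnn).1 hsum0 a (Finset.mem_univ a)
    have hqw : ∀ a, π' (k+1) s a ≠ 0 → qOf r P γ w s a = Tstar r P γ w s := by
      intro a ha
      have hqvk : qOf r P γ (v k) s a = Tstar r P γ (v k) s := by
        rcases mul_eq_zero.1 (hterm a) with h | h
        · exact absurd h ha
        · linarith
      have h1 : qOf r P γ (v k) s a ≤ qOf r P γ w s a := by
        have h0 : ∀ s', v k s' ≤ w s' + 0 := fun s' => by
          have := hvlew k s'; linarith
        have := qOf_shift (r := r) hP hγ0' h0 s a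
        simpa using this
      have h2 : Tstar r P γ w s ≤ Tstar r P γ (v k) s + γ * δ := by
        apply Tstar_shift (r := r) hP hγ0'
        intro s'
        have := hK₂ k hk s'
        linarith
      have h3 : Tstar r P γ w s - δ < qOf r P γ w s a := by
        have hγδ : γ * δ < δ := by nlinarith
        linarith [h1, h2, hqvk.ge, hqvk.le]
      by_contra hne
      have hle : qOf r P γ w s a ≤ Tstar r P γ w s :=
        Finset.le_sup' (fun a => qOf r P γ w s a) (Finset.mem_univ a)
      have hlt : qOf r P γ w s a < Tstar r P γ w s := lt_of_le_of_ne hle hne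
      have hmem : (s, a) ∈ Gs := by
        rw [hGsdef]; exact Finset.mem_filter.2 ⟨Finset.mem_univ _, hlt⟩
      have hδle : δ ≤ Tstar r P γ w s - qOf r P γ w s a := by
        rw [hδdef, dif_pos ⟨(s,a), hmem⟩]
        exact Finset.inf'_le _ hmem
      linarith
    have hzero : ∑ a, π' (k+1) s a * (Tstar r P γ w s - qOf r P γ w s a) = 0 := by
      apply Finset.sum_eq_zero
      intro a _
      by_cases ha : π' (k+1) s a = 0
      · rw [ha, zero_mul]
      · rw [hqw a ha, sub_self, mul_zero]
    have h1 : ∑ a, π' (k+1) s a * (Tstar r P γ w s - qOf r P γ w s a)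
        = (∑ a, π' (k+1) s a) * Tstar r P γ w s - Tpol r P γ (π' (k+1)) w s := by
      simp only [Tpol]
      rw [Finset.sum_mul, ← Finset.sum_sub_distrib]
      congr 1; funext a; ring
    rw [h1, (hπ' (k+1)).2 s, one_mul] at hzero
    linarith
  -- Step F : w = vstar
  obtain ⟨s₀⟩ := (inferInstance : Nonempty S)
  set δseq : ℕ → ℝ := fun k => Finset.univ.sup' Finset.univ_nonempty
    (fun s => Tstar r P γ w s - Tpol r P γ (π k) w s) with hδseqdef
  have hδseq0 : ∀ k, 0 ≤ δseq k := by
    intro k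
    have h1 : Tpol r P γ (π k) w s₀ ≤ Tstar r P γ w s₀ := Tpol_le_Tstar (hπ k) _ s₀
    exact le_trans (by linarith) (Finset.le_sup'
      (fun s => Tstar r P γ w s - Tpol r P γ (π k) w s) (Finset.mem_univ s₀))
  have hδdec : ∀ k, K₂ ≤ k → δseq (k+1) ≤ (1 - α) * δseq k := by
    intro k hk
    apply Finset.sup'_le
    intro s _
    have h2 : Tpol r P γ (π (k+1)) w s
        = (1 - α) * Tpol r P γ (π k) w s + α * Tpol r P γ (π' (k+1)) w s := by
      rw [hmix k]; exact Tpol_mix _ s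
    rw [h2, hopt k hk s]
    have h3 : Tstar r P γ w s - Tpol r P γ (π k) w s ≤ δseq k :=
      Finset.le_sup' (fun s => Tstar r P γ w s - Tpol r P γ (π k) w s) (Finset.mem_univ s)
    nlinarith
  have hδtend : Filter.Tendsto δseq Filter.atTop (nhds 0) := by
    have hx : Filter.Tendsto (fun j => δseq (j + K₂)) Filter.atTop (nhds 0) := by
      apply tendsto_zero_of_geom_rec (γ := 1 - α) (by linarith) (by linarith)
        (fun j => hδseq0 (j + K₂)) (u := fun _ => 0) _ tendsto_const_nhds
      intro j
      have := hδdec (j + K₂) (Nat.le_add_left K₂ j)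
      calc δseq (j + 1 + K₂) = δseq ((j + K₂) + 1) := by ring_nf
        _ ≤ (1 - α) * δseq (j + K₂) + 0 := by linarith
    exact (Filter.tendsto_add_atTop_iff_nat K₂).1 hx
  set εsup : ℕ → ℝ := fun k => Finset.univ.sup' Finset.univ_nonempty
    (fun s => w s - v k s) with hεsupdef
  have hεsup0 : ∀ k, 0 ≤ εsup k := by
    intro k
    exact le_trans (by linarith [hvlew k s₀]) (Finset.le_sup'
      (fun s => w s - v k s) (Finset.mem_univ s₀))
  have hεsup_tend : Filter.Tendsto εsup Filter.atTop (nhds 0) := by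
    rw [Metric.tendsto_atTop]
    intro ε hε
    obtain ⟨K, hK⟩ := hD (ε/2) (by linarith)
    refine ⟨K, fun k hk => ?_⟩
    rw [Real.dist_eq, sub_zero, abs_of_nonneg (hεsup0 k)]
    have : εsup k ≤ ε/2 := by
      apply Finset.sup'_le
      intro s _
      exact le_of_lt (hK k hk s)
    linarith
  set E : ℕ → ℝ := fun k => Finset.univ.sup' Finset.univ_nonempty
    (fun s => Tstar r P γ (v k) s - Tpol r P γ (π k) (v k) s) with hEdef
  have hE0 : ∀ k, 0 ≤ E k := by
    intro k
    have h1 : Tpol r P γ (π k) (v k) s₀ ≤ Tstar r P γ (v k) s₀ := Tpol_le_Tstar (hπ k) _ s₀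
    exact le_trans (by linarith) (Finset.le_sup' _ (Finset.mem_univ s₀))
  have hEle : ∀ k, E k ≤ δseq k + γ * εsup k := by
    intro k
    apply Finset.sup'_le
    intro s _
    have h1 : Tstar r P γ (v k) s ≤ Tstar r P γ w s := by
      have h0 : ∀ s', v k s' ≤ w s' + 0 := fun s' => by linarith [hvlew k s']
      have := Tstar_shift (r := r) hP hγ0' h0 s
      simpa using this
    have h2 : Tpol r P γ (π k) w s ≤ Tpol r P γ (π k) (v k) s + γ * εsup k := by
      apply Tpol_shift (r := r) hP hγ0' (hπ k)
      intro s'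
      have := Finset.le_sup' (fun s => w s - v k s) (Finset.mem_univ s')
      linarith [this]
    have h3 : Tstar r P γ w s - Tpol r P γ (π k) w s ≤ δseq k :=
      Finset.le_sup' (fun s => Tstar r P γ w s - Tpol r P γ (π k) w s) (Finset.mem_univ s)
    linarith
  have hEtend : Filter.Tendsto E Filter.atTop (nhds 0) := by
    apply squeeze_zero hE0 hEle
    have := hδtend.add (hεsup_tend.const_mul γ)
    simpa using this
  set N : ℕ → ℝ := fun k => Finset.univ.sup' Finset.univ_nonempty
    (fun s => vstar s - v k s) with hNdef
  have hNrec : ∀ k, N (k+1) ≤ γ * N k + (1 - α) * E k := by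
    intro k
    apply Finset.sup'_le
    intro s _
    have ht1 : Tstar r P γ vstar s ≤ Tstar r P γ (v k) s + γ * N k := by
      apply Tstar_shift (r := r) hP hγ0'
      intro s'
      have := Finset.le_sup' (fun s => vstar s - v k s) (Finset.mem_univ s')
      linarith [this]
    have ht2 : Tstar r P γ (v k) s - Tpol r P γ (π (k+1)) (v k) s
        = (1 - α) * (Tstar r P γ (v k) s - Tpol r P γ (π k) (v k) s) := by
      have h2 : Tpol r P γ (π (k+1)) (v k) s
          = (1 - α) * Tpol r P γ (π k) (v k) s + α * Tpol r P γ (π' (k+1)) (v k) s := by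
        rw [hmix k]; exact Tpol_mix _ s
      rw [h2, hgreedy k s]
      ring
    have ht2' : Tstar r P γ (v k) s - Tpol r P γ (π (k+1)) (v k) s ≤ (1 - α) * E k := by
      rw [ht2]
      have := Finset.le_sup' (fun s => Tstar r P γ (v k) s - Tpol r P γ (π k) (v k) s)
        (Finset.mem_univ s)
      nlinarith
    have ht3 : Tpol r P γ (π (k+1)) (v k) s ≤ v (k+1) s := hTm k s
    have hs := hstar s
    linarith
  set x : ℕ → ℝ := fun k => max (N k) 0 with hxdef
  have hxrec : ∀ k, x (k+1) ≤ γ * x k + (1 - α) * E k := by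
    intro k
    apply max_le
    · have h1 : N k ≤ x k := le_max_left _ _
      have := hNrec k
      nlinarith
    · have h1 : 0 ≤ x k := le_max_right _ _
      have h2 := hE0 k
      nlinarith
  have hxtend : Filter.Tendsto x Filter.atTop (nhds 0) := by
    apply tendsto_zero_of_geom_rec hγ0' hγ1 (fun k => le_max_right _ _) hxrec
    have := hEtend.const_mul (1 - α)
    simpa using this
  have hstar_le_w : ∀ s, vstar s ≤ w s := by
    intro s
    have h1 : ∀ k, vstar s - w s ≤ x k := by
      intro k
      have h2 : vstar s - v k s ≤ N k :=
        Finset.le_sup' (fun s => vstar s - v k s) (Finset.mem_univ s)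
      have h3 := hvlew k s
      calc vstar s - w s ≤ vstar s - v k s := by linarith
        _ ≤ N k := h2
        _ ≤ x k := le_max_left _ _
    have := ge_of_tendsto hxtend (Filter.Eventually.of_forall h1)
    linarith
  have hw_eq : w = vstar := funext fun s => le_antisymm (hwle s) (hstar_le_w s)
  refine ⟨K₂, fun k hk s => ?_⟩
  have := hopt k hk s
  rw [hw_eq] at this
  rw [this, hstar s]




end Aux
section AbsStar
variable {S A : Type*} [Fintype S] [Fintype A] [Nonempty S] [Nonempty A]
variable {r : S → A → ℝ} {P : S → A → S → ℝ} {γ : ℝ}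

lemma Tstar_abs_bound {R M : ℝ} (hP : IsKernel P) (hγ0 : 0 ≤ γ) (hr : ∀ s a, |r s a| ≤ R)
    {u : S → ℝ} (hu : ∀ s, |u s| ≤ M) :
    ∀ s, |Tstar r P γ u s| ≤ R + γ * M := by
  intro s
  have hq : ∀ a, |qOf r P γ u s a| ≤ R + γ * M := by
    intro a
    simp only [qOf]
    have h1 : |∑ s', P s a s' * u s'| ≤ M := by
      calc |∑ s', P s a s' * u s'| ≤ ∑ s', |P s a s' * u s'| := Finset.abs_sum_le_sum_abs _ _
        _ ≤ ∑ s', P s a s' * M := by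
            apply Finset.sum_le_sum
            intro s' _
            rw [abs_mul, abs_of_nonneg (hP.1 s a s')]
            exact mul_le_mul_of_nonneg_left (hu s') (hP.1 s a s')
        _ = M := by rw [← Finset.sum_mul, hP.2 s a, one_mul]
    calc |r s a + γ * ∑ s', P s a s' * u s'| ≤ |r s a| + |γ * ∑ s', P s a s' * u s'| := abs_add_le _ _
      _ ≤ R + γ * M := by
          rw [abs_mul, abs_of_nonneg hγ0]
          exact add_le_add (hr s a) (mul_le_mul_of_nonneg_left h1 hγ0)
  rw [abs_le]
  constructor
  · obtain ⟨a₀⟩ := (inferInstance : Nonempty A)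
    have h1 : qOf r P γ u s a₀ ≤ Tstar r P γ u s :=
      Finset.le_sup' (fun a => qOf r P γ u s a) (Finset.mem_univ a₀)
    have h2 := (abs_le.1 (hq a₀)).1
    linarith
  · apply Finset.sup'_le
    intro a _
    exact (abs_le.1 (hq a)).2

lemma star_fix_abs_bound {R : ℝ} (hP : IsKernel P) (hγ0 : 0 ≤ γ) (hγ1 : γ < 1)
    (hr : ∀ s a, |r s a| ≤ R) {vf : S → ℝ}
    (hfix : ∀ s, Tstar r P γ vf s = vf s) : ∀ s, |vf s| ≤ R / (1 - γ) := by
  set M : ℝ := Finset.univ.sup' Finset.univ_nonempty (fun s => |vf s|) with hM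
  have hMb : ∀ s, |vf s| ≤ M := fun s => Finset.le_sup' (fun s => |vf s|) (Finset.mem_univ s)
  have key : M ≤ R + γ * M := by
    apply Finset.sup'_le
    intro s _
    have := Tstar_abs_bound hP hγ0 hr hMb s
    rw [hfix s] at this
    exact this
  intro s
  have h2 : M ≤ R / (1 - γ) := by
    rw [le_div_iff₀ (by linarith)]
    nlinarith
  exact le_trans (hMb s) h2

end AbsStar
theorem conservative_mpi_linear_convergence {S A : Type*} [Fintype S] [Fintype A]
    [Nonempty S] [Nonempty A]
    (r : S → A → ℝ) (P : S → A → S → ℝ) (hP : IsKernel P)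
    (γ : ℝ) (hγ : γ ∈ Set.Ioo (0:ℝ) 1)
    (R : ℝ) (hr : ∀ s a, |r s a| ≤ R)
    (m : ℕ) (hm : 1 ≤ m) (α : ℝ) (hα : α ∈ Set.Ioc (0:ℝ) 1)
    (π π' : ℕ → S → A → ℝ) (hπ : ∀ k, IsPolicy (π k)) (hπ' : ∀ k, IsPolicy (π' k))
    (v : ℕ → S → ℝ)
    (hrec : ∀ k, v (k + 1) = (Tpol r P γ (π (k + 1)))^[m] (v k))
    (hgreedy : ∀ k s, Tpol r P γ (π' (k + 1)) (v k) s = Tstar r P γ (v k) s)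
    (hmix : ∀ k, π (k + 1) = fun s a => (1 - α) * π k s a + α * π' (k + 1) s a)
    (vπ : ℕ → S → ℝ) (hvπ : ∀ k, Tpol r P γ (π k) (vπ k) = vπ k)
    (vstar : S → ℝ) (hstar : ∀ s, Tstar r P γ vstar s = vstar s) :
    ∃ C : ℝ, ∀ k, ‖vstar - vπ k‖ ≤ C * (1 - α * (1 - γ)) ^ k := by
  obtain ⟨hγ0, hγ1⟩ := hγ
  obtain ⟨hα0, hα1⟩ := hα
  have hγ0' : (0:ℝ) ≤ γ := le_of_lt hγ0
  have h1γ : (0:ℝ) < 1 - γ := by linarith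
  -- the shifted value sequence, with a monotone start
  set c₀ : ℝ := (max 0 (Finset.univ.sup' Finset.univ_nonempty
      (fun s => v 0 s - Tpol r P γ (π 1) (v 0) s))) / (1 - γ) with hc₀def
  have hc₀0 : 0 ≤ c₀ := div_nonneg (le_max_left _ _) (le_of_lt h1γ)
  set vt : ℕ → S → ℝ := fun k s => v k s + -(γ ^ (m * k) * c₀) with hvtdef
  have hrec' : ∀ k, vt (k + 1) = (Tpol r P γ (π (k + 1)))^[m] (vt k) := by
    intro k
    funext s
    have h1 : (Tpol r P γ (π (k+1)))^[m] (vt k) s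
        = (Tpol r P γ (π (k+1)))^[m] (v k) s + γ ^ m * -(γ ^ (m * k) * c₀) := by
      have := Tpol_iter_shift_exact (r := r) (γ := γ) hP (hπ (k+1)) m
        (u := v k) (c := -(γ ^ (m * k) * c₀)) s
      simpa [hvtdef] using this
    rw [h1, ← hrec k]
    simp only [hvtdef]
    have : γ ^ m * (γ ^ (m * k) * c₀) = γ ^ (m * (k+1)) * c₀ := by
      rw [← mul_assoc, ← pow_add]
      congr 2
      ring
    rw [← this]
    ring
  have hgreedy' : ∀ k s, Tpol r P γ (π' (k + 1)) (vt k) s = Tstar r P γ (vt k) s := by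
    intro k s
    have h1 : Tpol r P γ (π' (k+1)) (vt k) s
        = Tpol r P γ (π' (k+1)) (v k) s + γ * -(γ ^ (m * k) * c₀) := by
      have := Tpol_shift_exact (r := r) (γ := γ) hP (hπ' (k+1)) (u := v k) (c := -(γ ^ (m * k) * c₀)) s
      simpa [hvtdef] using this
    have h2 : Tstar r P γ (vt k) s
        = Tstar r P γ (v k) s + γ * -(γ ^ (m * k) * c₀) := by
      have := Tstar_shift_exact (r := r) (γ := γ) hP (u := v k) (c := -(γ ^ (m * k) * c₀)) s
      simpa [hvtdef] using this
    rw [h1, h2, hgreedy k s]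
  have hstart' : ∀ s, vt 0 s ≤ Tpol r P γ (π 1) (vt 0) s := by
    intro s
    have h1 : Tpol r P γ (π 1) (vt 0) s
        = Tpol r P γ (π 1) (v 0) s + γ * -(γ ^ (m * 0) * c₀) := by
      have := Tpol_shift_exact (r := r) (γ := γ) hP (hπ 1) (u := v 0) (c := -(γ ^ (m * 0) * c₀)) s
      simpa [hvtdef] using this
    have h2 : v 0 s - Tpol r P γ (π 1) (v 0) s ≤ (1 - γ) * c₀ := by
      rw [hc₀def, mul_div_cancel₀ _ (ne_of_gt h1γ)]
      exact le_trans (Finset.le_sup'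
        (fun s => v 0 s - Tpol r P γ (π 1) (v 0) s) (Finset.mem_univ s)) (le_max_right _ _)
    rw [h1]
    simp only [hvtdef, Nat.mul_zero, pow_zero, one_mul]
    linarith
  obtain ⟨K₂, hopt⟩ := aux_eventually_opt r P hP γ ⟨hγ0, hγ1⟩ m hm α ⟨hα0, hα1⟩
    π π' hπ hπ' vt hrec' hgreedy' hmix vstar hstar hstart'
  -- endgame
  obtain ⟨s₀⟩ := (inferInstance : Nonempty S)
  obtain ⟨a₀⟩ := (inferInstance : Nonempty A)
  have hR0 : 0 ≤ R := le_trans (abs_nonneg _) (hr s₀ a₀)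
  set M₀ : ℝ := R / (1 - γ) with hM₀def
  have hM₀0 : 0 ≤ M₀ := div_nonneg hR0 (le_of_lt h1γ)
  have hvstarb : ∀ s, |vstar s| ≤ M₀ := star_fix_abs_bound hP hγ0' hγ1 hr hstar
  have hTb : ∀ k s, |Tpol r P γ (π k) vstar s| ≤ M₀ := by
    intro k s
    have := Tpol_abs_bound hP hγ0' hr (hπ k) hvstarb s
    calc |Tpol r P γ (π k) vstar s| ≤ R + γ * M₀ := this
      _ = M₀ := by
          rw [hM₀def]
          field_simp
          ring
  set φ : ℕ → ℝ := fun k => Finset.univ.sup' Finset.univ_nonempty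
    (fun s => vstar s - Tpol r P γ (π k) vstar s) with hφdef
  have hφ0 : ∀ k, 0 ≤ φ k := by
    intro k
    have h1 : Tpol r P γ (π k) vstar s₀ ≤ Tstar r P γ vstar s₀ := Tpol_le_Tstar (hπ k) _ s₀
    rw [hstar s₀] at h1
    exact le_trans (by linarith) (Finset.le_sup' _ (Finset.mem_univ s₀))
  have hφub : ∀ k, φ k ≤ 2 * M₀ := by
    intro k
    apply Finset.sup'_le
    intro s _
    have h1 := (abs_le.1 (hvstarb s)).2
    have h2 := (abs_le.1 (hTb k s)).1
    linarith
  have hφdec : ∀ k, K₂ ≤ k → φ (k + 1) ≤ (1 - α) * φ k := by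
    intro k hk
    apply Finset.sup'_le
    intro s _
    have h2 : Tpol r P γ (π (k+1)) vstar s
        = (1 - α) * Tpol r P γ (π k) vstar s + α * Tpol r P γ (π' (k+1)) vstar s := by
      rw [hmix k]; exact Tpol_mix _ s
    rw [h2, hopt k hk s]
    have h3 : vstar s - Tpol r P γ (π k) vstar s ≤ φ k :=
      Finset.le_sup' (fun s => vstar s - Tpol r P γ (π k) vstar s) (Finset.mem_univ s)
    nlinarith
  have hgeom : ∀ j, φ (K₂ + j) ≤ (1 - α) ^ j * φ K₂ := by
    intro j
    induction j with
    | zero => simp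
    | succ j ih =>
      have h1 := hφdec (K₂ + j) (Nat.le_add_right K₂ j)
      have h2 : (0:ℝ) ≤ 1 - α := by linarith
      calc φ (K₂ + (j + 1)) = φ ((K₂ + j) + 1) := by ring_nf
        _ ≤ (1 - α) * φ (K₂ + j) := h1
        _ ≤ (1 - α) * ((1 - α) ^ j * φ K₂) := mul_le_mul_of_nonneg_left ih h2
        _ = (1 - α) ^ (j + 1) * φ K₂ := by ring
  -- losses
  have hloss : ∀ k s, vstar s - vπ k s ≤ φ k / (1 - γ) := by
    intro k s
    have h1 : ∀ s, vstar s ≤ Tpol r P γ (π k) vstar s + φ k := by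
      intro s
      have := Finset.le_sup' (fun s => vstar s - Tpol r P γ (π k) vstar s) (Finset.mem_univ s)
      linarith [this]
    have := fp_le (r := r) hP hγ0' hγ1 (hπ k) (hvπ k) h1 s
    linarith
  have hle : ∀ k s, vπ k s ≤ vstar s := by
    intro k s
    have h1 : ∀ s, Tpol r P γ (π k) vstar s ≤ vstar s + 0 := by
      intro s
      have := Tpol_le_Tstar (r := r) (P := P) (γ := γ) (hπ k) vstar s
      rw [hstar s] at this
      linarith
    have := fp_ge (r := r) hP hγ0' hγ1 (hπ k) (hvπ k) h1 s
    simpa using this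
  -- the rate
  set ρ : ℝ := 1 - α * (1 - γ) with hρdef
  have hρ0 : 0 < ρ := by nlinarith
  have hρ1 : ρ ≤ 1 := by nlinarith
  have h1αρ : 1 - α ≤ ρ := by nlinarith
  have h1α0 : (0:ℝ) ≤ 1 - α := by linarith
  have hρK : (0:ℝ) < ρ ^ K₂ := pow_pos hρ0 K₂
  have hφρ : ∀ k, φ k * ρ ^ K₂ ≤ 2 * M₀ * ρ ^ k := by
    intro k
    rcases le_or_gt K₂ k with hk | hk
    · obtain ⟨j, rfl⟩ := Nat.exists_eq_add_of_le hk
      have h1 : φ (K₂ + j) ≤ (1 - α) ^ j * φ K₂ := hgeom j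
      have h2 : (1 - α) ^ j ≤ ρ ^ j := pow_le_pow_left₀ h1α0 h1αρ j
      have h3 : φ K₂ ≤ 2 * M₀ := hφub K₂
      have h4 : (0:ℝ) ≤ ρ ^ j := le_of_lt (pow_pos hρ0 j)
      have h5 : (0:ℝ) ≤ (1 - α) ^ j := pow_nonneg h1α0 j
      have hA : (1 - α) ^ j * φ K₂ ≤ ρ ^ j * (2 * M₀) := by nlinarith [hφ0 K₂]
      calc φ (K₂ + j) * ρ ^ K₂ ≤ ((1 - α) ^ j * φ K₂) * ρ ^ K₂ :=
            mul_le_mul_of_nonneg_right h1 (le_of_lt hρK)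
        _ ≤ (ρ ^ j * (2 * M₀)) * ρ ^ K₂ := mul_le_mul_of_nonneg_right hA (le_of_lt hρK)
        _ = 2 * M₀ * ρ ^ (K₂ + j) := by rw [pow_add]; ring
    · have h1 : ρ ^ K₂ ≤ ρ ^ k := pow_le_pow_of_le_one (le_of_lt hρ0) hρ1 (le_of_lt hk)
      have h2 := hφub k
      have h3 := hφ0 k
      nlinarith [pow_pos hρ0 k]
  refine ⟨2 * M₀ / (1 - γ) / ρ ^ K₂, fun k => ?_⟩
  have hC0 : 0 ≤ 2 * M₀ / (1 - γ) / ρ ^ K₂ * ρ ^ k := by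
    apply mul_nonneg _ (le_of_lt (pow_pos hρ0 k))
    apply div_nonneg _ (le_of_lt hρK)
    apply div_nonneg (by linarith) (le_of_lt h1γ)
  rw [pi_norm_le_iff_of_nonneg hC0]
  intro s
  have h1 : (vstar - vπ k) s = vstar s - vπ k s := rfl
  rw [h1, Real.norm_eq_abs, abs_of_nonneg (by linarith [hle k s])]
  have h2 := hloss k s
  have h3 := hφρ k
  -- φ k / (1-γ) ≤ 2M₀ ρ^k / (1-γ) / ρ^K₂
  rw [div_div]
  rw [div_mul_eq_mul_div, le_div_iff₀ (by positivity)]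
  calc (vstar s - vπ k s) * ((1 - γ) * ρ ^ K₂)
      ≤ (φ k / (1 - γ)) * ((1 - γ) * ρ ^ K₂) := by
        apply mul_le_mul_of_nonneg_right h2
        positivity
    _ = φ k * ρ ^ K₂ := by field_simp
    _ ≤ 2 * M₀ * ρ ^ k := h3
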